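/- arXiv:2011.12632 — 5 statements merged into one kernel-verified Lean document; each statement's English description precedes it below -/
import Mathlib

section
/- Let c : [a,b] → ℝ² be an injective, regular C^{1,1} curve parametrized by arclength. Then for every point x = c(t) with t ∈ (a,b) there exists δ > 0 such that every point y in the ball B_{δ/2}(x) has a unique nearest point on the curve segment c((a,b)) ∩ B_δ(x); i.e., the nearest-point projection P : B_{δ/2}(x) → c((a,b)) ∩ B_δ(x) is well defined. -/
open Set Metric

set_option maxHeartbeats 1000000

local notation "⟪" x ", " y "⟫" => @inner ℝ _ _ x y

/-- An injective, regular `C^{1,1}` arclength-parametrized planar curve admits,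
around each interior point, a ball on which the nearest-point projection onto the
local curve segment is well defined (the nearest point exists and is unique). -/
theorem stmt0
    (a b : ℝ) (hab : a < b)
    (c c' : ℝ → EuclideanSpace ℝ (Fin 2)) (L : ℝ)
    (hderiv : ∀ t ∈ Set.Icc a b, HasDerivAt c (c' t) t)
    (hlip : ∀ s ∈ Set.Icc a b, ∀ t ∈ Set.Icc a b, ‖c' s - c' t‖ ≤ L * |s - t|)
    (harc : ∀ t ∈ Set.Icc a b, ‖c' t‖ = 1)
    (hinj : Set.InjOn c (Set.Icc a b))
    (t0 : ℝ) (ht0 : t0 ∈ Set.Ioo a b) :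
    ∃ δ > 0, ∀ y ∈ Metric.ball (c t0) (δ / 2),
      ∃! p, p ∈ c '' Set.Ioo a b ∩ Metric.ball (c t0) δ ∧
        dist y p = Metric.infDist y (c '' Set.Ioo a b ∩ Metric.ball (c t0) δ) := by
  have ht0ab : t0 ∈ Set.Icc a b := ⟨ht0.1.le, ht0.2.le⟩
  -- L is nonnegative
  have hL0 : 0 ≤ L := by
    have h := hlip a (Set.left_mem_Icc.2 hab.le) b (Set.right_mem_Icc.2 hab.le)
    have habs : |a - b| = b - a := by rw [abs_of_neg (by linarith)]; ring
    nlinarith [norm_nonneg (c' a - c' b)]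
  have hL1 : (0:ℝ) < L + 1 := by linarith
  -- choice of the radius in parameter space
  set r : ℝ := min ((t0 - a)/2) (min ((b - t0)/2) (1/(8*(L+1)))) with hr_def
  have hr0 : 0 < r := by
    apply lt_min (by linarith [ht0.1])
    exact lt_min (by linarith [ht0.2]) (by positivity)
  have hra : r < t0 - a := lt_of_le_of_lt (min_le_left _ _) (by linarith [ht0.1])
  have hrb : r < b - t0 :=
    lt_of_le_of_lt ((min_le_right _ _).trans (min_le_left _ _)) (by linarith [ht0.2])
  have hrL' : r ≤ 1/(8*(L+1)) := (min_le_right _ _).trans (min_le_right _ _)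
  have hrL : L * r ≤ 1/8 := by
    have h1 : L * r ≤ L * (1/(8*(L+1))) := by
      apply mul_le_mul_of_nonneg_left hrL' hL0
    have h2 : L * (1/(8*(L+1))) ≤ 1/8 := by
      rw [mul_one_div, div_le_div_iff₀ (by positivity : (0:ℝ) < 8*(L+1)) (by norm_num : (0:ℝ) < 8)]
      nlinarith
    linarith
  set J : Set ℝ := Set.Icc (t0 - r) (t0 + r) with hJ_def
  have hJIoo : J ⊆ Set.Ioo a b := fun u hu => ⟨by linarith [hu.1], by linarith [hu.2]⟩
  have hJIcc : J ⊆ Set.Icc a b := fun u hu => (Set.Ioo_subset_Icc_self (hJIoo hu))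
  have ht0J : t0 ∈ J := ⟨by linarith, by linarith⟩
  -- continuity of c on [a,b]
  have hc_cont : ContinuousOn c (Set.Icc a b) :=
    fun u hu => (hderiv u hu).continuousAt.continuousWithinAt
  -- c is 1-Lipschitz on [a,b]
  have hlip1 : ∀ s ∈ Set.Icc a b, ∀ t ∈ Set.Icc a b, ‖c s - c t‖ ≤ |s - t| := by
    intro s hs t ht
    have := (convex_Icc a b).norm_image_sub_le_of_norm_hasDerivWithin_le
      (f' := c') (fun u hu => (hderiv u hu).hasDerivWithinAt)
      (fun u hu => le_of_eq (harc u hu)) ht hs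
    simpa [Real.norm_eq_abs] using this
  -- points of the curve far from t0 in parameter are far from c t0 in space
  set K : Set (EuclideanSpace ℝ (Fin 2)) :=
      c '' (Set.Icc a b \ Set.Ioo (t0 - r) (t0 + r)) with hK_def
  have hKne : K.Nonempty := by
    refine ⟨c a, a, ⟨Set.left_mem_Icc.2 hab.le, ?_⟩, rfl⟩
    intro h; exact absurd h.1 (by linarith)
  have hKcompact : IsCompact K :=
    ((isCompact_Icc).diff isOpen_Ioo).image_of_continuousOn
      (hc_cont.mono (Set.diff_subset))
  have hc0K : c t0 ∉ K := by
    rintro ⟨t, ht, hct⟩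
    have : t = t0 := hinj ht.1 ht0ab hct
    exact ht.2 (this ▸ ⟨by linarith, by linarith⟩)
  set δ₀ : ℝ := infDist (c t0) K with hδ₀_def
  have hδ₀ : 0 < δ₀ :=
    (hKcompact.isClosed.notMem_iff_infDist_pos hKne).1 hc0K
  set δ : ℝ := min δ₀ (1/(4*(L+1))) with hδ_def
  have hδ0 : 0 < δ := lt_min hδ₀ (by positivity)
  have hδL : L * δ ≤ 1/4 := by
    have h1 : L * δ ≤ L * (1/(4*(L+1))) :=
      mul_le_mul_of_nonneg_left (min_le_right _ _) hL0
    have h2 : L * (1/(4*(L+1))) ≤ 1/4 := by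
      rw [mul_one_div, div_le_div_iff₀ (by positivity : (0:ℝ) < 4*(L+1)) (by norm_num : (0:ℝ) < 4)]
      nlinarith
    linarith
  refine ⟨δ, hδ0, ?_⟩
  intro y hy
  have hyd : dist y (c t0) < δ / 2 := mem_ball.1 hy
  -- localization: curve points in the ball have parameters in J
  have hloc : ∀ t ∈ Set.Ioo a b, c t ∈ Metric.ball (c t0) δ → t ∈ Set.Ioo (t0 - r) (t0 + r) := by
    intro t ht hball
    by_contra h
    have hmemK : c t ∈ K := ⟨t, ⟨Set.Ioo_subset_Icc_self ht, h⟩, rfl⟩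
    have h1 : δ₀ ≤ dist (c t0) (c t) := infDist_le_dist_of_mem hmemK
    have h2 : dist (c t0) (c t) < δ := by rw [dist_comm]; exact mem_ball.1 hball
    have h3 : δ ≤ δ₀ := min_le_left _ _
    linarith
  -- the squared distance function
  set f : ℝ → ℝ := fun u => ‖c u - y‖^2 with hf_def
  set φ : ℝ → ℝ := fun u => 2 * ⟪c u - y, c' u⟫ with hφ_def
  have hf_deriv : ∀ u ∈ Set.Icc a b, HasDerivAt f (φ u) u := by
    intro u hu
    have h1 : HasDerivAt (fun v => c v - y) (c' u) u := (hderiv u hu).sub_const y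
    have h2 := h1.inner ℝ h1
    have h3 : (fun v => ⟪c v - y, c v - y⟫) = f := by
      funext v
      simp only [hf_def]
      exact real_inner_self_eq_norm_sq _
    have hval : ⟪c u - y, c' u⟫ + ⟪c' u, c u - y⟫ = φ u := by
      simp only [hφ_def]
      linear_combination (real_inner_comm (c u - y) (c' u))
    rw [h3, hval] at h2
    exact h2
  have hf_cont : ContinuousOn f J :=
    fun u hu => ((hf_deriv u (hJIcc hu)).continuousAt).continuousWithinAt
  have hfd : ∀ u, f u = (dist y (c u))^2 := by
    intro u
    rw [dist_eq_norm, norm_sub_rev]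
  -- strict monotonicity of φ on J
  have hφ_mono : StrictMonoOn φ J := by
    intro s hs t ht hst
    have hsab : s ∈ Set.Icc a b := hJIcc hs
    have htab : t ∈ Set.Icc a b := hJIcc ht
    -- term A : ⟪c t - c s, c' t⟫ ≥ (1 - 2 L² r²)(t - s)
    set m : ℝ := 1 - 2*(L*r)^2 with hm_def
    have hA : m * (t - s) ≤ ⟪c t - c s, c' t⟫ := by
      set g : ℝ → ℝ := fun u => ⟪c u, c' t⟫ with hg_def
      have hg_deriv : ∀ u ∈ Set.Icc a b, HasDerivAt g ⟪c' u, c' t⟫ u := by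
        intro u hu
        have := (hderiv u hu).inner ℝ (hasDerivAt_const u (c' t))
        simpa [hg_def] using this
      have hg_cont : ContinuousOn g J :=
        fun u hu => ((hg_deriv u (hJIcc hu)).continuousAt).continuousWithinAt
      have hg_diff : DifferentiableOn ℝ g (interior J) := by
        intro u hu
        exact ((hg_deriv u (hJIcc (interior_subset hu))).differentiableAt).differentiableWithinAt
      have hg_bound : ∀ u ∈ interior J, m ≤ deriv g u := by
        intro u hu
        have huJ : u ∈ J := interior_subset hu
        have huab : u ∈ Set.Icc a b := hJIcc huJ
        rw [(hg_deriv u huab).deriv]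
        have hn : ‖c' u - c' t‖ ≤ L * |u - t| := hlip u huab t htab
        have habs : |u - t| ≤ 2*r := by
          rw [abs_le]
          constructor <;> [linarith [huJ.1, ht.2]; linarith [huJ.2, ht.1]]
        have hLut : L * |u - t| ≤ 2*(L*r) := by nlinarith
        have hnorm2 : ‖c' u - c' t‖^2 ≤ 4*(L*r)^2 := by
          nlinarith [norm_nonneg (c' u - c' t), abs_nonneg (u - t),
            mul_nonneg hL0 (abs_nonneg (u - t))]
        have hid : ‖c' u - c' t‖^2 = ‖c' u‖^2 - 2*⟪c' u, c' t⟫ + ‖c' t‖^2 :=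
          norm_sub_sq_real (c' u) (c' t)
        rw [harc u huab, harc t htab] at hid
        nlinarith
      have h5 := (convex_Icc (t0 - r) (t0 + r)).mul_sub_le_image_sub_of_le_deriv
        hg_cont hg_diff hg_bound s hs t ht hst.le
      have hsplit : g t - g s = ⟪c t - c s, c' t⟫ := by
        simp only [hg_def, inner_sub_left]
      linarith
    -- term B : |⟪c s - y, c' t - c' s⟫| ≤ (r + δ/2) * (L * (t - s))
    have hB : |⟪c s - y, c' t - c' s⟫| ≤ (r + δ/2) * (L * (t - s)) := by
      have h1 : |⟪c s - y, c' t - c' s⟫| ≤ ‖c s - y‖ * ‖c' t - c' s‖ :=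
        abs_real_inner_le_norm _ _
      have h2 : ‖c s - y‖ ≤ r + δ/2 := by
        have ha1 : ‖c s - c t0‖ ≤ |s - t0| := hlip1 s hsab t0 ht0ab
        have ha2 : |s - t0| ≤ r := by
          rw [abs_le]; exact ⟨by linarith [hs.1], by linarith [hs.2]⟩
        have ha3 : ‖c t0 - y‖ < δ/2 := by
          rw [← dist_eq_norm, dist_comm]; exact hyd
        calc ‖c s - y‖ = ‖(c s - c t0) + (c t0 - y)‖ := by abel_nf
          _ ≤ ‖c s - c t0‖ + ‖c t0 - y‖ := norm_add_le _ _
          _ ≤ r + δ/2 := by linarith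
      have h3 : ‖c' t - c' s‖ ≤ L * (t - s) := by
        have := hlip t htab s hsab
        rwa [abs_of_pos (by linarith : (0:ℝ) < t - s)] at this
      calc |⟪c s - y, c' t - c' s⟫| ≤ ‖c s - y‖ * ‖c' t - c' s‖ := h1
        _ ≤ (r + δ/2) * (L * (t - s)) := by
            apply mul_le_mul h2 h3 (norm_nonneg _) (by linarith [hδ0, hr0])
      -- done
    -- combine
    have hsplit : φ t - φ s = 2 * (⟪c t - c s, c' t⟫ + ⟪c s - y, c' t - c' s⟫) := by
      simp only [hφ_def, inner_sub_left, inner_sub_right]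
      ring
    have hBlow : -((r + δ/2) * (L * (t - s))) ≤ ⟪c s - y, c' t - c' s⟫ :=
      neg_le_of_abs_le hB
    have hcoef : (r + δ/2) * L ≤ 1/4 := by nlinarith
    have hts : 0 < t - s := sub_pos.2 hst
    have hLr2 : (L*r)^2 ≤ 1/64 := by nlinarith [mul_nonneg hL0 hr0.le]
    have hmge : (31:ℝ)/32 ≤ m := by rw [hm_def]; nlinarith
    have k1 : (r + δ/2)*(L*(t-s)) ≤ (1/4)*(t-s) := by
      nlinarith [mul_le_mul_of_nonneg_right hcoef hts.le]
    have k2 : (31/32:ℝ)*(t-s) ≤ m*(t-s) := mul_le_mul_of_nonneg_right hmge hts.le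
    have hpos : 0 < φ t - φ s := by nlinarith [hsplit, hA, hBlow, k1, k2, hts]
    linarith
  -- strict convexity of f on J
  have hf_deriv_eq : ∀ u ∈ Set.Icc a b, deriv f u = φ u :=
    fun u hu => (hf_deriv u hu).deriv
  have hf_convex : StrictConvexOn ℝ J f := by
    apply StrictMonoOn.strictConvexOn_of_deriv (convex_Icc _ _) hf_cont
    intro x hx y' hy' hxy
    have hxJ : x ∈ J := interior_subset hx
    have hy'J : y' ∈ J := interior_subset hy'
    rw [hf_deriv_eq x (hJIcc hxJ), hf_deriv_eq y' (hJIcc hy'J)]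
    exact hφ_mono hxJ hy'J hxy
  -- existence of the minimizer
  obtain ⟨t₁, ht₁J, ht₁min⟩ :=
    isCompact_Icc.exists_isMinOn ⟨t0, ht0J⟩ hf_cont
  have ht₁min' : ∀ u ∈ J, f t₁ ≤ f u := fun u hu => ht₁min hu
  have hdist_t₁ : dist y (c t₁) ≤ dist y (c t0) := by
    have h1 : f t₁ ≤ f t0 := ht₁min' t0 ht0J
    rw [hfd, hfd] at h1
    exact le_of_pow_le_pow_left₀ (by norm_num) dist_nonneg h1
  have hdist_t₁' : dist y (c t₁) < δ/2 := lt_of_le_of_lt hdist_t₁ hyd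
  have hball_t₁ : c t₁ ∈ Metric.ball (c t0) δ := by
    rw [mem_ball]
    calc dist (c t₁) (c t0) ≤ dist (c t₁) y + dist y (c t0) := dist_triangle _ _ _
      _ < δ/2 + δ/2 := by rw [dist_comm (c t₁) y]; exact add_lt_add hdist_t₁' hyd
      _ = δ := by ring
  set S : Set (EuclideanSpace ℝ (Fin 2)) :=
    c '' Set.Ioo a b ∩ Metric.ball (c t0) δ with hS_def
  have hSmem : c t₁ ∈ S := ⟨⟨t₁, hJIoo ht₁J, rfl⟩, hball_t₁⟩
  have hSne : S.Nonempty := ⟨c t₁, hSmem⟩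
  -- every point of S comes from a parameter in J and is no closer than c t₁
  have hparamJ : ∀ u ∈ Set.Ioo a b, c u ∈ Metric.ball (c t0) δ → u ∈ J := by
    intro u hu hb'
    exact Set.Ioo_subset_Icc_self (hloc u hu hb')
  have hmin_le : ∀ p ∈ S, dist y (c t₁) ≤ dist y p := by
    rintro p ⟨⟨u, hu, rfl⟩, hpball⟩
    have huJ : u ∈ J := hparamJ u hu hpball
    have h1 : f t₁ ≤ f u := ht₁min' u huJ
    rw [hfd, hfd] at h1
    exact le_of_pow_le_pow_left₀ (by norm_num) dist_nonneg h1
  have hinf : dist y (c t₁) = infDist y S := by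
    refine le_antisymm ?_ (infDist_le_dist_of_mem hSmem)
    by_contra h
    push_neg at h
    obtain ⟨p, hpS, hp⟩ := (infDist_lt_iff hSne).1 h
    exact absurd hp (not_lt.2 (hmin_le p hpS))
  refine ⟨c t₁, ⟨hSmem, hinf⟩, ?_⟩
  rintro p ⟨hpS, hpd⟩
  obtain ⟨⟨u, hu, rfl⟩, hpball⟩ := hpS
  have huJ : u ∈ J := hparamJ u hu hpball
  have hfu : f u = f t₁ := by
    rw [hfd, hfd, hpd, hinf]
  have humin : IsMinOn f J u := by
    intro v hv
    have : f t₁ ≤ f v := ht₁min' v hv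
    simp only [Set.mem_setOf_eq]
    calc f u = f t₁ := hfu
      _ ≤ f v := this
  have : u = t₁ := hf_convex.eq_of_isMinOn humin ht₁min huJ ht₁J
  rw [this]
end

section
/- Let c : [a,b] → ℝ² be C^{1,1} and parametrized by arclength with a unit normal ν that is Lipschitz with constant L. Suppose y ∈ ℝ² and t¹ < t² in (a,b) satisfy c(tⁱ) − y = λ ν(tⁱ) for i = 1, 2 with the same λ > 0. Then there exist ξ₁, ξ₂ ∈ (t¹, t²) such that |(ċ¹(ξ₁), ċ²(ξ₂))| · |t¹ − t²| ≤ L λ |t¹ − t²|, where ċ¹, ċ² denote the components of the derivative of c. -/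
open Set

/-- Mean value theorem step: two foot points `t¹ < t²` with the same signed
distance `λ > 0` to a point `y` yield `ξ₁, ξ₂ ∈ (t¹,t²)` with
`|(ċ¹(ξ₁), ċ²(ξ₂))|·|t¹ - t²| ≤ L λ |t¹ - t²|`. -/
theorem stmt9
    (a b : ℝ) (hab : a < b)
    (c c' ν : ℝ → EuclideanSpace ℝ (Fin 2)) (L : ℝ)
    (hderiv : ∀ t ∈ Set.Icc a b, HasDerivAt c (c' t) t)
    (harc : ∀ t ∈ Set.Icc a b, ‖c' t‖ = 1)
    (hν : ∀ t ∈ Set.Ioo a b, ‖ν t‖ = 1)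
    (hνlip : ∀ s ∈ Set.Ioo a b, ∀ t ∈ Set.Ioo a b, ‖ν s - ν t‖ ≤ L * |s - t|)
    (y : EuclideanSpace ℝ (Fin 2)) (t1 t2 lam : ℝ)
    (h1 : t1 ∈ Set.Ioo a b) (h2 : t2 ∈ Set.Ioo a b) (hlt : t1 < t2)
    (hlam : 0 < lam)
    (hfoot1 : c t1 - y = lam • ν t1) (hfoot2 : c t2 - y = lam • ν t2) :
    ∃ ξ1 ∈ Set.Ioo t1 t2, ∃ ξ2 ∈ Set.Ioo t1 t2,
      Real.sqrt ((c' ξ1 0) ^ 2 + (c' ξ2 1) ^ 2) * |t1 - t2| ≤ L * lam * |t1 - t2| := by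
  have hsub : Set.Icc t1 t2 ⊆ Set.Icc a b :=
    Set.Icc_subset_Icc h1.1.le h2.2.le
  -- componentwise MVT
  have comp : ∀ i : Fin 2, ∃ ξ ∈ Set.Ioo t1 t2,
      c' ξ i = (c t2 i - c t1 i) / (t2 - t1) := by
    intro i
    have hd : ∀ t ∈ Set.Ioo t1 t2, HasDerivAt (fun t => c t i) (c' t i) t := by
      intro t ht
      have := (hderiv t (hsub (Set.Ioo_subset_Icc_self ht)))
      exact ((EuclideanSpace.proj i).hasFDerivAt.comp_hasDerivAt t this)
    have hc : ContinuousOn (fun t => c t i) (Set.Icc t1 t2) := by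
      intro t ht
      exact (((EuclideanSpace.proj i).hasFDerivAt.comp_hasDerivAt t
        (hderiv t (hsub ht))).continuousAt).continuousWithinAt
    obtain ⟨ξ, hξ, hval⟩ := exists_hasDerivAt_eq_slope (fun t => c t i) (fun t => c' t i)
      hlt hc hd
    exact ⟨ξ, hξ, by rw [hval]⟩
  obtain ⟨ξ1, hξ1, hv1⟩ := comp 0
  obtain ⟨ξ2, hξ2, hv2⟩ := comp 1
  refine ⟨ξ1, hξ1, ξ2, hξ2, ?_⟩
  have hdiff : c t2 - c t1 = lam • (ν t2 - ν t1) := by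
    have : c t2 - c t1 = (c t2 - y) - (c t1 - y) := by abel
    rw [this, hfoot1, hfoot2, smul_sub]
  have hnorm : ‖c t2 - c t1‖ ≤ L * lam * (t2 - t1) := by
    rw [hdiff, norm_smul, Real.norm_eq_abs, abs_of_pos hlam]
    have := hνlip t2 h2 t1 h1
    rw [abs_of_pos (by linarith : (0:ℝ) < t2 - t1)] at this
    nlinarith
  have hne : t2 - t1 ≠ 0 := by linarith
  have hnormeq : ‖c t2 - c t1‖ = Real.sqrt ((c t2 0 - c t1 0)^2 + (c t2 1 - c t1 1)^2) := by
    rw [EuclideanSpace.norm_eq]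
    congr 1
    rw [Fin.sum_univ_two]
    simp [sq_abs, sq]
  have key : Real.sqrt ((c' ξ1 0) ^ 2 + (c' ξ2 1) ^ 2) =
      ‖c t2 - c t1‖ / (t2 - t1) := by
    rw [hv1, hv2, hnormeq, div_pow, div_pow, ← add_div,
      Real.sqrt_div (by positivity), Real.sqrt_sq (by linarith)]
  have habs : |t1 - t2| = t2 - t1 := by
    rw [abs_sub_comm, abs_of_pos (by linarith)]
  rw [key, habs, div_mul_cancel₀ _ hne]
  calc ‖c t2 - c t1‖ ≤ L * lam * (t2 - t1) := hnorm
    _ = L * lam * (t2 - t1) := rfl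
end

section
/- Let c : [a,b] → ℝ² be C^{1,1} parametrized by arclength with unit normal ν Lipschitz with constant L. Then there is no sequence of points y_n ∈ ℝ² and parameters t_n¹ < t_n² in (a,b) with |t_n¹ − t_n²| → 0 and a common value λ_n ∈ (0, 1/n] such that c(t_nⁱ) − y_n = λ_n ν(t_nⁱ) for i = 1,2 for all n. Equivalently: two distinct foot points with equal small positive signed distance on the same side cannot occur for points arbitrarily close to the curve. -/
open Set Filter

/-- Two distinct foot points with equal small positive signed distance on the same
side cannot occur for points arbitrarily close to a `C^{1,1}` arclength curve with
Lipschitz unit normal. -/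
theorem stmt10
    (a b : ℝ) (hab : a < b)
    (c c' ν : ℝ → EuclideanSpace ℝ (Fin 2)) (L Lν : ℝ)
    (hderiv : ∀ t ∈ Set.Icc a b, HasDerivAt c (c' t) t)
    (hlip : ∀ s ∈ Set.Icc a b, ∀ t ∈ Set.Icc a b, ‖c' s - c' t‖ ≤ L * |s - t|)
    (harc : ∀ t ∈ Set.Icc a b, ‖c' t‖ = 1)
    (hinj : Set.InjOn c (Set.Icc a b))
    (hν : ∀ t ∈ Set.Ioo a b, ‖ν t‖ = 1 ∧ (inner ℝ (ν t) (c' t) : ℝ) = 0)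
    (hνlip : ∀ s ∈ Set.Ioo a b, ∀ t ∈ Set.Ioo a b, ‖ν s - ν t‖ ≤ Lν * |s - t|) :
    ¬ ∃ (y : ℕ → EuclideanSpace ℝ (Fin 2)) (t1 t2 lam : ℕ → ℝ),
      (∀ n : ℕ, t1 n ∈ Set.Ioo a b ∧ t2 n ∈ Set.Ioo a b ∧ t1 n < t2 n ∧
        0 < lam n ∧ lam n ≤ 1 / (n + 1) ∧
        c (t1 n) - y n = lam n • ν (t1 n) ∧ c (t2 n) - y n = lam n • ν (t2 n)) ∧
      Filter.Tendsto (fun n => |t1 n - t2 n|) Filter.atTop (nhds 0) := by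
  rintro ⟨y, t1, t2, lam, h, htend⟩
  -- L is nonnegative
  have hL0 : 0 ≤ L := by
    have h1 := hlip a ⟨le_refl a, hab.le⟩ b ⟨hab.le, le_refl b⟩
    rw [abs_of_neg (show a - b < 0 by linarith)] at h1
    nlinarith [norm_nonneg (c' a - c' b)]
  have hLν0 : 0 ≤ Lν := by
    obtain ⟨ht, ht2, hlt, -⟩ := h 0
    have h1 := hνlip _ ht _ ht2
    rw [abs_of_neg (show t1 0 - t2 0 < 0 by linarith)] at h1
    nlinarith [norm_nonneg (ν (t1 0) - ν (t2 0))]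
  have h2L : (0:ℝ) < 2 * (L + 1) := by linarith
  have hev1 : ∀ᶠ n in atTop, |t1 n - t2 n| < (2 * (L + 1))⁻¹ :=
    htend.eventually_lt_const (by positivity)
  have hev2 : ∀ᶠ n : ℕ in atTop, 2 * Lν < (n : ℝ) + 1 := by
    filter_upwards [eventually_gt_atTop ⌈2 * Lν⌉₊] with n hn
    have h1 : 2 * Lν ≤ (⌈2 * Lν⌉₊ : ℝ) := Nat.le_ceil _
    have h2 : ((⌈2 * Lν⌉₊ : ℕ) : ℝ) < n := by exact_mod_cast hn
    linarith
  obtain ⟨N, hN1, hN2⟩ := (hev1.and hev2).exists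
  obtain ⟨h1, h2, h12, hlam, hlamle, heq1, heq2⟩ := h N
  set s := t1 N with hs
  set t := t2 N with ht
  have hsub : Set.Icc s t ⊆ Set.Icc a b := fun x hx => ⟨h1.1.le.trans hx.1, hx.2.trans h2.2.le⟩
  set v := c' s with hv
  have hΔpos : (0:ℝ) < t - s := sub_pos.mpr h12
  have habsΔ : |s - t| = t - s := by rw [abs_of_neg (by linarith)]; ring
  have hsmem : s ∈ Set.Icc s t := ⟨le_refl s, h12.le⟩
  have htmem : t ∈ Set.Icc s t := ⟨h12.le, le_refl t⟩
  -- Taylor-type estimate via MVT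
  have hf : ∀ x ∈ Set.Icc s t,
      HasDerivWithinAt (fun x => c x - x • v) (c' x - v) (Set.Icc s t) x := by
    intro x hx
    have hd1 : HasDerivAt (fun x : ℝ => x • v) v x := by
      simpa using (hasDerivAt_id x).smul_const v
    exact ((hderiv x (hsub hx)).sub hd1).hasDerivWithinAt
  have hbound : ∀ x ∈ Set.Icc s t, ‖c' x - v‖ ≤ L * (t - s) := by
    intro x hx
    have hb := hlip x (hsub hx) s (hsub hsmem)
    have habs : |x - s| = x - s := abs_of_nonneg (by linarith [hx.1])
    rw [habs] at hb
    have : x - s ≤ t - s := by linarith [hx.2]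
    nlinarith
  have key : ‖(c t - t • v) - (c s - s • v)‖ ≤ (L * (t - s)) * ‖t - s‖ :=
    Convex.norm_image_sub_le_of_norm_hasDerivWithin_le hf hbound (convex_Icc s t) hsmem htmem
  have hnormv : ‖v‖ = 1 := harc s (hsub hsmem)
  have hA : ‖(t - s) • v‖ = t - s := by
    rw [norm_smul, Real.norm_eq_abs, abs_of_pos hΔpos, hnormv, mul_one]
  have hAB : (c t - t • v) - (c s - s • v) = (c t - c s) - (t - s) • v := by
    rw [sub_smul]; abel
  have hnormts : ‖t - s‖ = t - s := by rw [Real.norm_eq_abs, abs_of_pos hΔpos]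
  rw [hAB, hnormts] at key
  have hlower : (t - s) - L * (t - s) * (t - s) ≤ ‖c t - c s‖ := by
    have htri := abs_norm_sub_norm_le (c t - c s) ((t - s) • v)
    rw [hA] at htri
    have := abs_le.mp htri
    linarith [this.1]
  have hupper : ‖c t - c s‖ ≤ lam N * (Lν * (t - s)) := by
    have heq : c t - c s = lam N • (ν t - ν s) := by
      calc c t - c s = (c t - y N) - (c s - y N) := by abel
        _ = lam N • ν t - lam N • ν s := by rw [heq2, heq1]
        _ = lam N • (ν t - ν s) := (smul_sub _ _ _).symm
    rw [heq, norm_smul, Real.norm_eq_abs, abs_of_pos hlam]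
    have hb := hνlip t h2 s h1
    rw [abs_of_pos hΔpos] at hb
    nlinarith
  -- small quantities
  have hΔsmall : 2 * (L + 1) * (t - s) < 1 := by
    have : |s - t| < (2 * (L + 1))⁻¹ := hN1
    rw [habsΔ] at this
    calc 2 * (L + 1) * (t - s) < 2 * (L + 1) * (2 * (L + 1))⁻¹ :=
          mul_lt_mul_of_pos_left this h2L
      _ = 1 := mul_inv_cancel₀ (ne_of_gt h2L)
  have hN1pos : (0:ℝ) < (N : ℝ) + 1 := by positivity
  have hlamLν : lam N * Lν < 1 / 2 := by
    have h1' : lam N * Lν ≤ 1 / ((N : ℝ) + 1) * Lν :=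
      mul_le_mul_of_nonneg_right hlamle hLν0
    have h2' : 1 / ((N : ℝ) + 1) * Lν < 1 / 2 := by
      rw [div_mul_eq_mul_div, one_mul, div_lt_iff₀ hN1pos]
      linarith
    linarith
  -- final contradiction
  have hfin : (t - s) - L * (t - s) * (t - s) ≤ (t - s) * (lam N * Lν) := by
    calc (t - s) - L * (t - s) * (t - s) ≤ ‖c t - c s‖ := hlower
      _ ≤ lam N * (Lν * (t - s)) := hupper
      _ = (t - s) * (lam N * Lν) := by ring
  nlinarith [mul_pos hΔpos hΔpos, mul_pos hΔpos (sub_pos.mpr hlamLν)]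
end

section
/- Let K ⊂ ℝ^n be closed with locally unique and continuous nearest-point projection P near a point x ∈ K, and let d(y) = dist(y, K)² be differentiable off K with ∇d(y) = 2(y − P(y)). If y_i → y ∈ K with y_i ∉ K and the unit vectors (y_i − P(y_i))/|y_i − P(y_i)| converge to a vector ν(y), then the (unsigned) distance function dist(·, K) is not differentiable at y, but the signed distance (with consistent sign choice) has gradient converging to ν(y); in particular the signed distance is C¹ up to K. -/
open Set Metric Filter RealInnerProductSpace

/-- At a point `y` of `K` approached by points `y_i ∉ K` whose unit directions to
their projections converge to a normal `ν(y)`: the unsigned distance to `K` is not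
differentiable at `y`, while the gradients of the (consistently) signed distance
converge to `ν(y)`, i.e. the signed distance is `C¹` up to `K`. -/
theorem stmt11
    (n : ℕ) (K : Set (EuclideanSpace ℝ (Fin n))) (hK : IsClosed K)
    (y : EuclideanSpace ℝ (Fin n)) (hy : y ∈ K)
    (U : Set (EuclideanSpace ℝ (Fin n))) (hU : IsOpen U) (hyU : y ∈ U)
    (P : EuclideanSpace ℝ (Fin n) → EuclideanSpace ℝ (Fin n))
    (hP : ∀ z ∈ U, P z ∈ K ∧ dist z (P z) = Metric.infDist z K ∧
      ∀ p ∈ K, dist z p = Metric.infDist z K → p = P z)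
    (hPc : ContinuousOn P U)
    (sd : EuclideanSpace ℝ (Fin n) → ℝ)
    (νK : EuclideanSpace ℝ (Fin n) → EuclideanSpace ℝ (Fin n))
    (hsd : ∀ z ∈ U, |sd z| = Metric.infDist z K)
    (hside : ∀ z ∈ U, z - P z = sd z • νK (P z))
    (hνK : ∀ p ∈ K ∩ U, ‖νK p‖ = 1)
    (hνKc : ContinuousOn νK (K ∩ U))
    (g : EuclideanSpace ℝ (Fin n) → EuclideanSpace ℝ (Fin n))
    (hg : ∀ z ∈ U \ K, HasGradientAt sd (g z) z ∧ g z = (sd z)⁻¹ • (z - P z))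
    (yseq : ℕ → EuclideanSpace ℝ (Fin n))
    (hseq : ∀ i, yseq i ∈ U \ K)
    (hlim : Filter.Tendsto yseq Filter.atTop (nhds y))
    (hunit : Filter.Tendsto
      (fun i => ‖yseq i - P (yseq i)‖⁻¹ • (yseq i - P (yseq i)))
      Filter.atTop (nhds (νK y))) :
    ¬ DifferentiableAt ℝ (fun z => Metric.infDist z K) y ∧
    Filter.Tendsto (fun i => g (yseq i)) Filter.atTop (nhds (νK y)) := by
  have hKne : K.Nonempty := ⟨y, hy⟩
  have hPy : P y = y := by
    obtain ⟨_, h2, _⟩ := hP y hyU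
    have h0 : dist y (P y) = 0 := by rw [h2, infDist_zero_of_mem hy]
    exact (dist_eq_zero.mp h0).symm
  have hpos : ∀ z ∈ U \ K, 0 < infDist z K := fun z hz =>
    (hK.notMem_iff_infDist_pos hKne).mp hz.2
  have hsd_ne : ∀ z ∈ U \ K, sd z ≠ 0 := by
    intro z hz h0
    have h1 := hsd z hz.1
    rw [h0, abs_zero] at h1
    exact (ne_of_gt (hpos z hz)) h1.symm
  have hgval : ∀ z ∈ U \ K, g z = νK (P z) := by
    intro z hz
    rw [(hg z hz).2, hside z hz.1, smul_smul, inv_mul_cancel₀ (hsd_ne z hz), one_smul]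
  -- convergence of projections
  have hPyseq : Tendsto (fun i => P (yseq i)) atTop (nhds y) := by
    have hc : ContinuousAt P y := hPc.continuousAt (hU.mem_nhds hyU)
    have h := hc.tendsto.comp hlim
    rwa [hPy] at h
  have hPmemK : ∀ i, P (yseq i) ∈ K := fun i => (hP _ (hseq i).1).1
  have hPU : ∀ᶠ i in atTop, P (yseq i) ∈ U :=
    hPyseq.eventually (hU.eventually_mem hyU)
  have h1 : Tendsto (fun i => νK (P (yseq i))) atTop (nhds (νK y)) := by
    have hcw : ContinuousWithinAt νK (K ∩ U) y := hνKc y ⟨hy, hyU⟩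
    apply hcw.tendsto.comp
    rw [tendsto_nhdsWithin_iff]
    exact ⟨hPyseq, hPU.mono fun i hiU => ⟨hPmemK i, hiU⟩⟩
  have part2 : Tendsto (fun i => g (yseq i)) atTop (nhds (νK y)) :=
    h1.congr fun i => (hgval _ (hseq i)).symm
  refine ⟨?_, part2⟩
  intro hdiff
  have hν : ‖νK y‖ = 1 := hνK y ⟨hy, hyU⟩
  -- continuity of sd on U
  have hsdc : ∀ z ∈ U, ContinuousAt sd z := by
    intro z hzU
    by_cases hzK : z ∈ K
    · have hz0 : sd z = 0 := by
        have h := hsd z hzU; rw [infDist_zero_of_mem hzK] at h; exact abs_eq_zero.mp h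
      rw [ContinuousAt, hz0]
      apply squeeze_zero_norm' (a := fun w => infDist w K)
      · filter_upwards [hU.mem_nhds hzU] with w hw
        rw [Real.norm_eq_abs, hsd w hw]
      · have h := (continuous_infDist_pt K).tendsto z
        rwa [infDist_zero_of_mem hzK] at h
    · exact (hg z ⟨hzU, hzK⟩).1.hasFDerivAt.continuousAt
  -- choice of ρ
  obtain ⟨ρ1, hρ1pos, hρ1⟩ : ∃ ρ1 > 0, ∀ p ∈ K ∩ U, dist p y < ρ1 →
      ‖νK p - νK y‖ < 1/8 := by
    have hcw : ContinuousWithinAt νK (K ∩ U) y := hνKc y ⟨hy, hyU⟩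
    rw [Metric.continuousWithinAt_iff] at hcw
    obtain ⟨d, hd, h⟩ := hcw (1/8) (by norm_num)
    exact ⟨d, hd, fun p hp hdist => by
      have := h hp hdist
      rwa [dist_eq_norm] at this⟩
  obtain ⟨ρ2, hρ2pos, hball⟩ := Metric.isOpen_iff.mp hU y hyU
  set ρ := min ρ1 ρ2 with hρ
  have hρpos : 0 < ρ := lt_min hρ1pos hρ2pos
  have hmemU : ∀ w, dist w y < ρ → w ∈ U := fun w h =>
    hball (mem_ball.mpr (lt_of_lt_of_le h (min_le_right _ _)))
  -- inner product bound
  have hip : ∀ p ∈ K, dist p y < ρ → ∀ u : EuclideanSpace ℝ (Fin n),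
      ‖u - νK y‖ < 1/8 → (3/4:ℝ) ≤ ⟪νK p, u⟫ := by
    intro p hpK hpd u hu
    have hpU : p ∈ U := hmemU p hpd
    have hnp : ‖νK p‖ = 1 := hνK p ⟨hpK, hpU⟩
    have hnd : ‖νK p - νK y‖ < 1/8 :=
      hρ1 p ⟨hpK, hpU⟩ (lt_of_lt_of_le hpd (min_le_left _ _))
    have e1 : ⟪νK p, u⟫ = ⟪νK y, νK y⟫ + ⟪νK p - νK y, νK y⟫ + ⟪νK p, u - νK y⟫ := by
      simp [inner_sub_left, inner_sub_right]; try ring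
    have e2 : ⟪νK y, νK y⟫ = 1 := by
      rw [real_inner_self_eq_norm_sq, hν]; norm_num
    have b1 := abs_le.mp (abs_real_inner_le_norm (νK p - νK y) (νK y))
    have b2 := abs_le.mp (abs_real_inner_le_norm (νK p) (u - νK y))
    rw [hν, mul_one] at b1
    rw [hnp, one_mul] at b2
    rw [e1, e2]
    linarith [b1.1, b2.1]
  -- key growth lemma along the normal ray:
  have key : ∀ p ∈ K, dist p y < ρ/4 → ‖νK p - νK y‖ < 1/8 →
      ∀ r : ℝ, 0 < r → r < ρ/4 → sd (p + r • νK p) = r →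
      ∀ t, r ≤ t → t ≤ ρ/4 → 3/4 * (t - r) ≤ infDist (p + t • νK p) K := by
    intro p hpK hpd hud r hr0 hrδ hψr t hrt ht
    set u := νK p with hu
    have hpU : p ∈ U := hmemU p (by linarith)
    have hun : ‖u‖ = 1 := hνK p ⟨hpK, hpU⟩
    set q : ℝ → EuclideanSpace ℝ (Fin n) := fun s => p + s • u with hq
    have hqdef : ∀ s, q s = p + s • u := fun s => rfl
    have hqy : ∀ s, 0 ≤ s → s ≤ ρ/4 → dist (q s) y < ρ/2 := by
      intro s h0 h4
      have h5 : dist (q s) p = s := by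
        rw [hqdef, dist_eq_norm, add_sub_cancel_left, norm_smul, hun, mul_one,
          Real.norm_eq_abs, abs_of_nonneg h0]
      calc dist (q s) y ≤ dist (q s) p + dist p y := dist_triangle _ _ _
      _ < ρ/4 + ρ/4 := by rw [h5]; exact add_lt_add_of_le_of_lt h4 hpd
      _ = ρ/2 := by ring
    have hqU : ∀ s, 0 ≤ s → s ≤ ρ/4 → q s ∈ U := fun s h0 h4 =>
      hmemU _ (lt_trans (hqy s h0 h4) (by linarith))
    have hψcont : ContinuousOn (fun s => sd (q s)) (Icc r (ρ/4)) := by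
      intro s hs
      have hca : ContinuousAt (fun s => sd (q s)) s := by
        apply (hsdc _ (hqU s (le_trans hr0.le hs.1) hs.2)).comp
        exact (continuous_const.add (continuous_id.smul continuous_const)).continuousAt
      exact hca.continuousWithinAt
    have hkey_deriv : ∀ s, 0 ≤ s → s ≤ ρ/4 → q s ∉ K →
        HasDerivAt (fun s => sd (q s)) ⟪g (q s), u⟫ s ∧ (3/4:ℝ) ≤ ⟪g (q s), u⟫ := by
      intro s h0 h4 hKs
      have hqsU : q s ∈ U := hqU s h0 h4
      have hline : HasDerivAt (fun s : ℝ => p + s • u) u s := by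
        have h := (hasDerivAt_id s).smul_const u
        simpa using h.const_add p
      have hgrad := (hg (q s) ⟨hqsU, hKs⟩).1
      have hcomp := hgrad.hasFDerivAt.comp_hasDerivAt s hline
      constructor
      · simp [InnerProductSpace.toDual_apply_apply] at hcomp; exact hcomp
      · rw [hgval _ ⟨hqsU, hKs⟩]
        apply hip _ (hP _ hqsU).1 _ _ hud
        calc dist (P (q s)) y ≤ dist (P (q s)) (q s) + dist (q s) y := dist_triangle _ _ _
        _ ≤ dist (q s) y + dist (q s) y := by
            rw [dist_comm (P (q s)), (hP _ hqsU).2.1]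
            exact add_le_add_left (infDist_le_dist_of_mem hy) _
        _ < ρ/2 + ρ/2 := by have := hqy s h0 h4; linarith
        _ = ρ := by ring
    have hψK : ∀ s, 0 ≤ s → s ≤ ρ/4 → 0 < sd (q s) → q s ∉ K := by
      intro s h0 h4 hps hmem
      have h := hsd (q s) (hqU s h0 h4)
      rw [infDist_zero_of_mem hmem] at h
      rw [abs_eq_zero.mp h] at hps
      exact lt_irrefl 0 hps
    have hpos' : ∀ s ∈ Icc r (ρ/4), 0 < sd (q s) := by
      by_contra hcon
      push_neg at hcon
      obtain ⟨t0, ht0, ht0le⟩ := hcon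
      set Z := Icc r (ρ/4) ∩ (fun s => sd (q s)) ⁻¹' Iic 0 with hZ
      have hZne : Z.Nonempty := ⟨t0, ht0, ht0le⟩
      have hZclosed : IsClosed Z :=
        hψcont.preimage_isClosed_of_isClosed isClosed_Icc isClosed_Iic
      have hZbdd : BddBelow Z := ⟨r, fun s hs => hs.1.1⟩
      have hcZ : sInf Z ∈ Z := hZclosed.csInf_mem hZne hZbdd
      set c := sInf Z with hc
      have hqc : sd (q c) ≤ 0 := hcZ.2
      have hrc : r < c := by
        rcases lt_or_eq_of_le hcZ.1.1 with h | h
        · exact h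
        · exfalso
          rw [← h, hqdef, hψr] at hqc
          linarith
      have hcIcc : c ∈ Icc r (ρ/4) := hcZ.1
      have hIco : ∀ s ∈ Ico r c, 0 < sd (q s) := by
        intro s hs
        by_contra hle
        push_neg at hle
        have hsZ : s ∈ Z := ⟨⟨hs.1, le_trans hs.2.le hcIcc.2⟩, hle⟩
        exact absurd (csInf_le hZbdd hsZ) (not_le.mpr hs.2)
      have hdiffOn : DifferentiableOn ℝ (fun s => sd (q s)) (interior (Icc r c)) := by
        rw [interior_Icc]
        intro s hs
        have h0 : (0:ℝ) ≤ s := le_trans hr0.le hs.1.le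
        have h4 : s ≤ ρ/4 := le_trans hs.2.le hcIcc.2
        have hps := hIco s ⟨hs.1.le, hs.2⟩
        exact ((hkey_deriv s h0 h4 (hψK s h0 h4 hps)).1.differentiableAt).differentiableWithinAt
      have hderivbnd : ∀ s ∈ interior (Icc r c), (3/4:ℝ) ≤ deriv (fun s => sd (q s)) s := by
        rw [interior_Icc]
        intro s hs
        have h0 : (0:ℝ) ≤ s := le_trans hr0.le hs.1.le
        have h4 : s ≤ ρ/4 := le_trans hs.2.le hcIcc.2
        have hps := hIco s ⟨hs.1.le, hs.2⟩
        have hd := hkey_deriv s h0 h4 (hψK s h0 h4 hps)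
        rw [hd.1.deriv]
        exact hd.2
      have hgrow := Convex.mul_sub_le_image_sub_of_le_deriv (convex_Icc r c)
        (hψcont.mono (Icc_subset_Icc le_rfl hcIcc.2)) hdiffOn hderivbnd
        r ⟨le_rfl, hrc.le⟩ c ⟨hrc.le, le_rfl⟩ hrc.le
      have hqr : sd (q r) = r := by rw [hqdef]; exact hψr
      rw [hqr] at hgrow
      linarith
    have hdiffOn2 : DifferentiableOn ℝ (fun s => sd (q s)) (interior (Icc r (ρ/4))) := by
      rw [interior_Icc]
      intro s hs
      have h0 : (0:ℝ) ≤ s := le_trans hr0.le hs.1.le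
      have h4 : s ≤ ρ/4 := hs.2.le
      have hps := hpos' s ⟨hs.1.le, h4⟩
      exact ((hkey_deriv s h0 h4 (hψK s h0 h4 hps)).1.differentiableAt).differentiableWithinAt
    have hderivbnd2 : ∀ s ∈ interior (Icc r (ρ/4)), (3/4:ℝ) ≤ deriv (fun s => sd (q s)) s := by
      rw [interior_Icc]
      intro s hs
      have h0 : (0:ℝ) ≤ s := le_trans hr0.le hs.1.le
      have h4 : s ≤ ρ/4 := hs.2.le
      have hps := hpos' s ⟨hs.1.le, h4⟩
      have hd := hkey_deriv s h0 h4 (hψK s h0 h4 hps)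
      rw [hd.1.deriv]
      exact hd.2
    have hgrow2 := Convex.mul_sub_le_image_sub_of_le_deriv (convex_Icc r (ρ/4))
      hψcont hdiffOn2 hderivbnd2 r ⟨le_rfl, hrδ.le⟩ t ⟨hrt, ht⟩ hrt
    have hqr : sd (q r) = r := by rw [hqdef]; exact hψr
    rw [hqr] at hgrow2
    have hψt : 0 < sd (q t) := hpos' t ⟨hrt, ht⟩
    have hinf : infDist (q t) K = sd (q t) := by
      rw [← hsd _ (hqU t (le_trans hr0.le hrt) ht), abs_of_pos hψt]
    have hgoal : 3/4 * (t - r) ≤ infDist (q t) K := by rw [hinf]; linarith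
    rw [hqdef] at hgoal
    exact hgoal
  -- eventual positivity of sd along the sequence
  have hEpos : ∀ᶠ i in atTop, 0 < sd (yseq i) := by
    have hdiff2 : Tendsto (fun i => (‖yseq i - P (yseq i)‖⁻¹ • (yseq i - P (yseq i)))
        - νK (P (yseq i))) atTop (nhds 0) := by
      simpa using hunit.sub h1
    have hsmall : ∀ᶠ i in atTop,
        ‖(‖yseq i - P (yseq i)‖⁻¹ • (yseq i - P (yseq i))) - νK (P (yseq i))‖ < 1 := by
      have h := hdiff2.eventually (Metric.ball_mem_nhds (0 : EuclideanSpace ℝ (Fin n)) one_pos)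
      filter_upwards [h] with i hi
      simpa [Metric.mem_ball, dist_eq_norm] using hi
    filter_upwards [hsmall, hPU] with i hi hiU
    rcases (hsd_ne _ (hseq i)).lt_or_gt with hneg | hps
    · exfalso
      have hnorm : ‖yseq i - P (yseq i)‖ = |sd (yseq i)| := by
        rw [← dist_eq_norm, (hP _ (hseq i).1).2.1, ← hsd _ (hseq i).1]
      have hunit_eq : ‖yseq i - P (yseq i)‖⁻¹ • (yseq i - P (yseq i))
          = -(νK (P (yseq i))) := by
        have hne := hsd_ne _ (hseq i)
        rw [hnorm, hside _ (hseq i).1, smul_smul, abs_of_neg hneg, inv_neg, neg_mul,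
          inv_mul_cancel₀ hne, neg_one_smul]
      rw [hunit_eq] at hi
      have hn1 : ‖νK (P (yseq i))‖ = 1 := hνK _ ⟨hPmemK i, hiU⟩
      have h2 : (-(νK (P (yseq i)))) - νK (P (yseq i)) = (-2 : ℝ) • νK (P (yseq i)) := by
        module
      rw [h2, norm_smul, hn1] at hi
      norm_num at hi
    · exact hps
  -- sd (yseq i) → 0
  have hsd0 : Tendsto (fun i => sd (yseq i)) atTop (nhds 0) := by
    apply squeeze_zero_norm' (a := fun i => infDist (yseq i) K)
    · exact Eventually.of_forall fun i =>
        le_of_eq (by rw [Real.norm_eq_abs, hsd _ (hseq i).1])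
    · have h := ((continuous_infDist_pt K).tendsto y).comp hlim
      rwa [infDist_zero_of_mem hy] at h
  -- the lower bound for the distance along the normal direction at y
  have hbound : ∀ t : ℝ, 0 < t → t ≤ ρ/4 → 3/4 * t ≤ infDist (y + t • νK y) K := by
    intro t ht0 htδ
    have hEdist : ∀ᶠ i in atTop, dist (P (yseq i)) y < ρ/4 := by
      have h := hPyseq.eventually (Metric.ball_mem_nhds y (by positivity : (0:ℝ) < ρ/4))
      filter_upwards [h] with i hi
      exact mem_ball.mp hi
    have hEν : ∀ᶠ i in atTop, ‖νK (P (yseq i)) - νK y‖ < 1/8 := by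
      have h := h1.eventually (Metric.ball_mem_nhds (νK y) (by norm_num : (0:ℝ) < 1/8))
      filter_upwards [h] with i hi
      have h2 := mem_ball.mp hi
      rwa [dist_eq_norm] at h2
    have hEr : ∀ᶠ i in atTop, sd (yseq i) < t := hsd0.eventually_lt_const ht0
    have hineq : ∀ᶠ i in atTop, 3/4 * (t - sd (yseq i)) ≤
        infDist (P (yseq i) + t • νK (P (yseq i))) K := by
      filter_upwards [hEpos, hEdist, hEν, hEr] with i h1i h2i h3i h4i
      have hpt : P (yseq i) + sd (yseq i) • νK (P (yseq i)) = yseq i := by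
        have h := hside _ (hseq i).1
        rw [← h]; abel
      apply key _ (hPmemK i) h2i h3i _ h1i (lt_of_lt_of_le h4i htδ) ?_ t h4i.le htδ
      rw [hpt]
    have hA : Tendsto (fun i => P (yseq i) + t • νK (P (yseq i))) atTop
        (nhds (y + t • νK y)) := hPyseq.add (h1.const_smul t)
    have hL : Tendsto (fun i => infDist (P (yseq i) + t • νK (P (yseq i))) K) atTop
        (nhds (infDist (y + t • νK y) K)) :=
      ((continuous_infDist_pt K).tendsto _).comp hA
    have hR : Tendsto (fun i => 3/4 * (t - sd (yseq i))) atTop (nhds (3/4 * t)) := by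
      have h := ((tendsto_const_nhds (x := t) (f := atTop)).sub hsd0).const_mul (3/4 : ℝ)
      simpa using h
    exact le_of_tendsto_of_tendsto hR hL hineq
  -- final contradiction
  have hmin : IsLocalMin (fun z => Metric.infDist z K) y :=
    Filter.Eventually.of_forall fun z => by
      simp only [infDist_zero_of_mem hy]; exact infDist_nonneg
  have hf0 : fderiv ℝ (fun z => Metric.infDist z K) y = 0 := hmin.fderiv_eq_zero
  have hF : HasFDerivAt (fun z => Metric.infDist z K)
      (0 : EuclideanSpace ℝ (Fin n) →L[ℝ] ℝ) y := by
    have h := hdiff.hasFDerivAt; rwa [hf0] at h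
  have hline : HasDerivAt (fun s : ℝ => y + s • νK y) (νK y) 0 := by
    have h := (hasDerivAt_id (0:ℝ)).smul_const (νK y)
    simpa using h.const_add y
  have hD : HasDerivAt (fun s : ℝ => Metric.infDist (y + s • νK y) K) 0 0 := by
    have h0pt : y = y + (0:ℝ) • νK y := by simp
    rw [h0pt] at hF
    have h := hF.comp_hasDerivAt 0 hline
    simp at h; exact h
  rw [hasDerivAt_iff_tendsto_slope] at hD
  have hD' : Tendsto (slope (fun s : ℝ => Metric.infDist (y + s • νK y) K) 0)
      (nhdsWithin 0 (Ioi 0)) (nhds 0) :=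
    hD.mono_left (nhdsWithin_mono 0 fun s hs => Set.mem_compl_singleton_iff.mpr (ne_of_gt hs))
  have hev : ∀ᶠ s in nhdsWithin (0:ℝ) (Ioi 0),
      (3/4 : ℝ) ≤ slope (fun s : ℝ => Metric.infDist (y + s • νK y) K) 0 s := by
    filter_upwards [Ioc_mem_nhdsGT_of_mem
      (Set.left_mem_Ico.mpr (by positivity : (0:ℝ) < ρ/4))] with s hs
    have hb := hbound s hs.1 hs.2
    have h0 : Metric.infDist (y + (0:ℝ) • νK y) K = 0 := by
      simp [infDist_zero_of_mem hy]
    rw [slope_def_field, h0, sub_zero, sub_zero, le_div_iff₀ hs.1]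
    linarith
  have hcontra : (3/4:ℝ) ≤ 0 := ge_of_tendsto hD' hev
  linarith
end

section
/- Let S ⊂ ℝ^n be a set, U open, and suppose on U the nearest-point projection P onto S exists and is continuous. Fix y ∈ U \ S. If for some v ∈ ℝ^n and ε > 0 there exist arbitrarily small t > 0 with dist(y+tv, S)² < dist(y, S)² + 2⟨y − P(y), tv⟩ − tε, then there exist arbitrarily small t > 0 with |y − P(y+tv)| < |y − P(y)|, contradicting that P(y) is a nearest point of S to y. Hence liminf_{t↘0} (dist(y+tv,S)² − dist(y,S)²)/t ≥ 2⟨y − P(y), v⟩. -/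
open Set Metric Filter

private lemma stmt15_arith (a d t A B V ε : ℝ) (ht0 : 0 < t) (hε : 0 < ε)
    (hlt : a ^ 2 < d ^ 2 + 2 * t * A - t * ε) (e3 : -(ε / 2) ≤ B) :
    a ^ 2 - 2 * (t * A + t * B + t ^ 2 * V ^ 2) + t ^ 2 * V ^ 2 < d ^ 2 := by
  nlinarith [sq_nonneg (t * V),
    mul_nonneg ht0.le (by linarith : (0:ℝ) ≤ B + ε / 2)]

private lemma stmt15_arith2 (a d t V : ℝ) (ht0 : 0 < t) (ht1 : t < 1)
    (hlip : a ≤ d + t * V) (h0 : 0 ≤ a) (h1 : 0 ≤ d) (hV : 0 ≤ V) :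
    a ^ 2 - d ^ 2 ≤ (2 * d * V + V ^ 2) * t := by
  nlinarith [mul_nonneg (sub_nonneg.2 hlip) (by linarith : (0:ℝ) ≤ d + t * V + a),
    mul_nonneg (mul_nonneg ht0.le (by linarith : (0:ℝ) ≤ 1 - t)) (sq_nonneg V)]

/-- The `liminf` lower bound for the one-sided derivative of the squared distance:
if the squared distance dropped faster than `2⟨y - P y, v⟩` along arbitrarily small
`t > 0`, then `P(y+tv)` would beat `P y`, a contradiction; hence
`liminf_{t↘0} (d(y+tv) - d(y))/t ≥ 2⟨y - P y, v⟩`. -/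
theorem stmt15
    (n : ℕ) (S : Set (EuclideanSpace ℝ (Fin n)))
    (U : Set (EuclideanSpace ℝ (Fin n))) (hU : IsOpen U)
    (P : EuclideanSpace ℝ (Fin n) → EuclideanSpace ℝ (Fin n))
    (hP : ∀ z ∈ U, P z ∈ S ∧ dist z (P z) = Metric.infDist z S)
    (hPc : ContinuousOn P U)
    (y : EuclideanSpace ℝ (Fin n)) (hy : y ∈ U) (hyS : y ∉ S) :
    (∀ v : EuclideanSpace ℝ (Fin n), ∀ ε > (0:ℝ),
      (∀ r > (0:ℝ), ∃ t : ℝ, 0 < t ∧ t < r ∧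
        (Metric.infDist (y + t • v) S) ^ 2 <
          (Metric.infDist y S) ^ 2 + 2 * t * (inner ℝ (y - P y) v : ℝ) - t * ε) →
      ∀ r > (0:ℝ), ∃ t : ℝ, 0 < t ∧ t < r ∧
        ‖y - P (y + t • v)‖ < ‖y - P y‖) ∧
    (∀ v : EuclideanSpace ℝ (Fin n),
      2 * (inner ℝ (y - P y) v : ℝ) ≤
        Filter.liminf
          (fun t : ℝ =>
            ((Metric.infDist (y + t • v) S) ^ 2 - (Metric.infDist y S) ^ 2) / t)
          (nhdsWithin 0 (Set.Ioi 0))) := by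
  obtain ⟨hPyS, hPyd⟩ := hP y hy
  have hnormPy : ‖y - P y‖ = Metric.infDist y S := by
    rw [← hPyd, dist_eq_norm]
  have key : ∀ (v : EuclideanSpace ℝ (Fin n)) (ε : ℝ), 0 < ε →
      (∀ r > (0:ℝ), ∃ t : ℝ, 0 < t ∧ t < r ∧
        (Metric.infDist (y + t • v) S) ^ 2 <
          (Metric.infDist y S) ^ 2 + 2 * t * (inner ℝ (y - P y) v : ℝ) - t * ε) →
      ∀ r > (0:ℝ), ∃ t : ℝ, 0 < t ∧ t < r ∧ (y + t • v) ∈ U ∧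
        ‖y - P (y + t • v)‖ < ‖y - P y‖ := by
    intro v ε hε h r hr
    obtain ⟨ρ, hρ, hball⟩ := Metric.isOpen_iff.1 hU y hy
    have hPat : ContinuousAt P y := hPc.continuousAt (hU.mem_nhds hy)
    have hv1 : (0:ℝ) < ‖v‖ + 1 := by positivity
    obtain ⟨δ, hδ, hδP⟩ := Metric.continuousAt_iff.1 hPat (ε / (2 * (‖v‖ + 1)))
      (by positivity)
    have hr'0 : 0 < min r (min (ρ / (‖v‖ + 1)) (δ / (‖v‖ + 1))) := by
      exact lt_min hr (lt_min (by positivity) (by positivity))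
    obtain ⟨t, ht0, htr', hlt⟩ := h _ hr'0
    have htr : t < r := lt_of_lt_of_le htr' (min_le_left _ _)
    have htρ : t < ρ / (‖v‖ + 1) :=
      lt_of_lt_of_le htr' (le_trans (min_le_right _ _) (min_le_left _ _))
    have htδ : t < δ / (‖v‖ + 1) :=
      lt_of_lt_of_le htr' (le_trans (min_le_right _ _) (min_le_right _ _))
    have htv : dist (y + t • v) y = t * ‖v‖ := by
      rw [dist_eq_norm, add_sub_cancel_left, norm_smul, Real.norm_eq_abs,
        abs_of_pos ht0]
    have htvρ : dist (y + t • v) y < ρ := by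
      rw [htv]
      calc t * ‖v‖ ≤ t * (‖v‖ + 1) := by nlinarith
        _ < ρ := by rw [lt_div_iff₀ hv1] at htρ; linarith
    have htvδ : dist (y + t • v) y < δ := by
      rw [htv]
      calc t * ‖v‖ ≤ t * (‖v‖ + 1) := by nlinarith
        _ < δ := by rw [lt_div_iff₀ hv1] at htδ; linarith
    have hmemU : y + t • v ∈ U := hball (Metric.mem_ball.2 htvρ)
    obtain ⟨hqS, hqd⟩ := hP (y + t • v) hmemU
    set q := P (y + t • v) with hq
    have hPq : dist q (P y) < ε / (2 * (‖v‖ + 1)) := hδP htvδ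
    have hnq : ‖P y - q‖ < ε / (2 * (‖v‖ + 1)) := by
      rw [← dist_eq_norm, dist_comm]; exact hPq
    have haq : ‖(y + t • v) - q‖ = Metric.infDist (y + t • v) S := by
      rw [← hqd, dist_eq_norm]
    have e1 : ‖y - q‖ ^ 2 = ‖(y + t • v) - q‖ ^ 2
        - 2 * (inner ℝ ((y + t • v) - q) (t • v) : ℝ) + ‖t • v‖ ^ 2 := by
      have heq : ((y + t • v) - q) - t • v = y - q := by abel
      rw [← heq, norm_sub_sq_real]
    have e2 : (inner ℝ ((y + t • v) - q) (t • v) : ℝ)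
        = t * (inner ℝ (y - P y) v : ℝ) + t * (inner ℝ (P y - q) v : ℝ)
          + t ^ 2 * ‖v‖ ^ 2 := by
      have heq2 : (y + t • v) - q = (y - P y) + ((P y - q) + t • v) := by abel
      rw [heq2, inner_add_left, inner_add_left, real_inner_smul_right,
        real_inner_smul_right, real_inner_smul_right, real_inner_smul_left,
        real_inner_self_eq_norm_sq]
      ring
    have e3 : -(ε / 2) ≤ (inner ℝ (P y - q) v : ℝ) := by
      have habs : |(inner ℝ (P y - q) v : ℝ)| ≤ ‖P y - q‖ * ‖v‖ :=
        abs_real_inner_le_norm _ _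
      have h1 : ‖P y - q‖ * ‖v‖ < ε / (2 * (‖v‖ + 1)) * (‖v‖ + 1) := by
        have hge : (0:ℝ) ≤ ‖P y - q‖ := norm_nonneg _
        nlinarith [norm_nonneg v]
      have h2 : ε / (2 * (‖v‖ + 1)) * (‖v‖ + 1) = ε / 2 := by
        field_simp
      rw [abs_le] at habs
      linarith
    have htn : ‖t • v‖ ^ 2 = t ^ 2 * ‖v‖ ^ 2 := by
      rw [norm_smul, mul_pow, Real.norm_eq_abs, sq_abs]
    have hsq : ‖y - q‖ ^ 2 < ‖y - P y‖ ^ 2 := by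
      rw [e1, e2, haq, htn, hnormPy]
      obtain ⟨A, hA⟩ : ∃ A : ℝ, (inner ℝ (y - P y) v : ℝ) = A := ⟨_, rfl⟩
      obtain ⟨B, hB⟩ : ∃ B : ℝ, (inner ℝ (P y - q) v : ℝ) = B := ⟨_, rfl⟩
      obtain ⟨a, ha⟩ : ∃ a : ℝ, Metric.infDist (y + t • v) S = a := ⟨_, rfl⟩
      obtain ⟨d, hd⟩ : ∃ d : ℝ, Metric.infDist y S = d := ⟨_, rfl⟩
      obtain ⟨V, hV⟩ : ∃ V : ℝ, ‖v‖ = V := ⟨_, rfl⟩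
      rw [hA, hB, ha, hd, hV]
      rw [hA, ha, hd] at hlt
      rw [hB] at e3
      exact stmt15_arith a d t A B V ε ht0 hε hlt e3
    exact ⟨t, ht0, htr, hmemU,
      lt_of_pow_lt_pow_left₀ 2 (norm_nonneg _) hsq⟩
  refine ⟨fun v ε hε h r hr => ?_, fun v => ?_⟩
  · obtain ⟨t, ht0, htr, _, hlt⟩ := key v ε hε h r hr
    exact ⟨t, ht0, htr, hlt⟩
  · set f := fun t : ℝ =>
      ((Metric.infDist (y + t • v) S) ^ 2 - (Metric.infDist y S) ^ 2) / t with hf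
    have hIoo1 : Ioo (0:ℝ) 1 ∈ nhdsWithin (0:ℝ) (Set.Ioi 0) :=
      Ioo_mem_nhdsGT_of_mem ⟨le_refl 0, one_pos⟩
    have hub : ∀ᶠ t in nhdsWithin (0:ℝ) (Set.Ioi 0),
        f t ≤ 2 * Metric.infDist y S * ‖v‖ + ‖v‖ ^ 2 := by
      filter_upwards [hIoo1] with t ht
      obtain ⟨ht0, ht1⟩ := ht
      have hlip : Metric.infDist (y + t • v) S ≤ Metric.infDist y S + t * ‖v‖ := by
        have := Metric.infDist_le_infDist_add_dist (x := y + t • v) (y := y) (s := S)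
        rwa [dist_eq_norm, add_sub_cancel_left, norm_smul, Real.norm_eq_abs,
          abs_of_pos ht0] at this
      have h0 : 0 ≤ Metric.infDist (y + t • v) S := Metric.infDist_nonneg
      have h1 : 0 ≤ Metric.infDist y S := Metric.infDist_nonneg
      rw [hf]
      simp only
      rw [div_le_iff₀ ht0]
      exact stmt15_arith2 _ _ t _ ht0 ht1 hlip h0 h1 (norm_nonneg v)
    have hcb : IsCoboundedUnder (· ≥ ·) (nhdsWithin (0:ℝ) (Set.Ioi 0)) f :=
      IsBoundedUnder.isCoboundedUnder_ge ⟨_, by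
        simpa [Filter.eventually_map] using hub⟩
    refine le_of_forall_sub_le fun ε hε => ?_
    have hev : ∀ᶠ t in nhdsWithin (0:ℝ) (Set.Ioi 0), 2 * (inner ℝ (y - P y) v : ℝ) - ε ≤ f t := by
      by_contra hcon
      rw [Filter.not_eventually] at hcon
      have hhyp : ∀ r > (0:ℝ), ∃ t : ℝ, 0 < t ∧ t < r ∧
          (Metric.infDist (y + t • v) S) ^ 2 <
            (Metric.infDist y S) ^ 2 + 2 * t * (inner ℝ (y - P y) v : ℝ) - t * ε := by
        intro r hr
        have hIoo : Ioo (0:ℝ) r ∈ nhdsWithin (0:ℝ) (Set.Ioi 0) :=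
          Ioo_mem_nhdsGT_of_mem ⟨le_refl 0, hr⟩
        obtain ⟨t, hnt, ht0, htr⟩ :=
          (hcon.and_eventually (eventually_of_mem hIoo fun x hx => hx)).exists
        push_neg at hnt
        refine ⟨t, ht0, htr, ?_⟩
        rw [hf] at hnt
        simp only at hnt
        rw [div_lt_iff₀ ht0] at hnt
        nlinarith
      obtain ⟨t, ht0, ht1, hmemU, hlt⟩ := key v ε hε hhyp 1 one_pos
      have hge : Metric.infDist y S ≤ ‖y - P (y + t • v)‖ := by
        rw [← dist_eq_norm]
        exact Metric.infDist_le_dist_of_mem (hP _ hmemU).1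
      rw [hnormPy] at hlt
      linarith
    exact le_liminf_of_le hcb hev
end
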